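/- Let M be an n×n Metzler matrix (all off-diagonal entries nonnegative) that is Hurwitz stable (all eigenvalues have negative real part). Then there exists a strictly positive vector z ∈ ℝ^n such that M·z < 0 entrywise. -/

import Mathlib

open Matrix

/-- A real square matrix is Metzler if its off-diagonal entries are nonnegative. -/
def Metzler {m : Type*} (M : Matrix m m ℝ) : Prop :=
  ∀ i j, i ≠ j → 0 ≤ M i j

/-- A real square matrix is Hurwitz stable if all of its (complex) eigenvalues
have strictly negative real part. -/
def HurwitzStable {m : Type*} [Fintype m] [DecidableEq m] (M : Matrix m m ℝ) : Prop :=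
  ∀ z ∈ spectrum ℂ (M.map (algebraMap ℝ ℂ)), z.re < 0


open Matrix Filter

namespace StmtAux2

attribute [local instance] Matrix.linftyOpNormedAddCommGroup Matrix.linftyOpNormedRing
  Matrix.linftyOpNormedAlgebra Matrix.linftyOpNormedSpace

variable {n : ℕ}

/-- entrywise nonnegative -/
def NN (X : Matrix (Fin n) (Fin n) ℝ) : Prop := ∀ i j, 0 ≤ X i j

lemma NN.mul {X Y : Matrix (Fin n) (Fin n) ℝ} (hX : NN X) (hY : NN Y) : NN (X * Y) := by
  intro i j
  rw [Matrix.mul_apply]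
  exact Finset.sum_nonneg fun k _ => mul_nonneg (hX i k) (hY k j)

lemma NN.one : NN (1 : Matrix (Fin n) (Fin n) ℝ) := by
  intro i j
  by_cases h : i = j <;> simp [Matrix.one_apply, h]

lemma NN.pow {X : Matrix (Fin n) (Fin n) ℝ} (hX : NN X) : ∀ k, NN (X ^ k)
  | 0 => by rw [pow_zero]; exact NN.one
  | (k + 1) => by rw [pow_succ]; exact (hX.pow k).mul hX

lemma NN.smul {X : Matrix (Fin n) (Fin n) ℝ} {c : ℝ} (hc : 0 ≤ c) (hX : NN X) : NN (c • X) := by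
  intro i j
  simpa using mul_nonneg hc (hX i j)

lemma entry_le_norm (X : Matrix (Fin n) (Fin n) ℝ) (i j : Fin n) : ‖X i j‖ ≤ ‖X‖ := by
  have h : ‖X i j‖₊ ≤ ‖X‖₊ := by
    rw [Matrix.linfty_opNNNorm_def]
    exact le_trans (Finset.single_le_sum (f := fun j => ‖X i j‖₊) (fun _ _ => zero_le)
      (Finset.mem_univ j)) (Finset.le_sup (f := fun i => ∑ j, ‖X i j‖₊) (Finset.mem_univ i))
  exact_mod_cast h

/-- the entry map as a continuous linear map -/
noncomputable def entryCLM (i j : Fin n) : Matrix (Fin n) (Fin n) ℝ →L[ℝ] ℝ :=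
  LinearMap.mkContinuous
    { toFun := fun X => X i j
      map_add' := fun _ _ => rfl
      map_smul' := fun _ _ => rfl }
    1 (fun X => by rw [one_mul]; exact entry_le_norm X i j)

@[simp] lemma entryCLM_apply (i j : Fin n) (X : Matrix (Fin n) (Fin n) ℝ) :
    entryCLM i j X = X i j := rfl

lemma NN.tsum {f : ℕ → Matrix (Fin n) (Fin n) ℝ} (hs : Summable f) (h : ∀ k, NN (f k)) :
    NN (∑' k, f k) := by
  intro i j
  have hmap : entryCLM i j (∑' k, f k) = ∑' k, entryCLM i j (f k) :=
    (entryCLM i j).map_tsum hs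
  simp only [entryCLM_apply] at hmap
  rw [hmap]
  exact tsum_nonneg fun k => h k i j

lemma NN.geom {x : Matrix (Fin n) (Fin n) ℝ} (hx_norm : ‖x‖ < 1) (hx : NN x) :
    NN (∑' k : ℕ, x ^ k) :=
  NN.tsum (summable_geometric_of_norm_lt_one hx_norm) hx.pow

end StmtAux2

open StmtAux2 in
theorem stmt2_main {n : ℕ} (M : Matrix (Fin n) (Fin n) ℝ)
    (hM : ∀ i j, i ≠ j → 0 ≤ M i j)
    (hH : ∀ z ∈ spectrum ℂ (M.map (algebraMap ℝ ℂ)), z.re < 0) :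
    ∃ z : Fin n → ℝ, (∀ i, 0 < z i) ∧ ∀ i, (M *ᵥ z) i < 0 := by
  classical
  letI := Matrix.linftyOpNormedAddCommGroup (m := Fin n) (n := Fin n) (α := ℝ)
  letI := Matrix.linftyOpNormedRing (n := Fin n) (α := ℝ)
  letI := Matrix.linftyOpNormedAlgebra (n := Fin n) (α := ℝ) (R := ℝ)
  letI := Matrix.linftyOpNormedSpace (R := ℝ) (m := Fin n) (n := Fin n) (α := ℝ)
  set s : ℝ := 1 + ∑ i, |M i i| with hs_def
  have hs_pos : 0 < s := by
    have : 0 ≤ ∑ i, |M i i| := Finset.sum_nonneg fun i _ => abs_nonneg _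
    linarith
  set A : Matrix (Fin n) (Fin n) ℝ := M + s • 1 with hA_def
  have hA_nn : NN A := by
    intro i j
    by_cases h : i = j
    · subst h
      have h1 : |M i i| ≤ ∑ k, |M k k| :=
        Finset.single_le_sum (f := fun k => |M k k|) (fun _ _ => abs_nonneg _) (Finset.mem_univ i)
      have h2 : -M i i ≤ |M i i| := neg_le_abs _
      simp only [hA_def, Matrix.add_apply, Matrix.smul_apply, Matrix.one_apply_eq, smul_eq_mul,
        mul_one]
      linarith
    · simp only [hA_def, Matrix.add_apply, Matrix.smul_apply, Matrix.one_apply_ne h, smul_eq_mul,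
        mul_zero, add_zero]
      exact hM i j h
  -- the resolvent-type family
  set E : ℝ → Matrix (Fin n) (Fin n) ℝ := fun t => t • 1 - A with hE_def
  set R : ℝ → Matrix (Fin n) (Fin n) ℝ := fun t => Ring.inverse (E t) with hR_def
  -- invertibility for t ≥ s
  have hEunit : ∀ t : ℝ, s ≤ t → IsUnit (E t) := by
    intro t hts
    by_contra hnu
    have hdet : (E t).det = 0 := by
      by_contra hd
      exact hnu ((Matrix.isUnit_iff_isUnit_det _).mpr (isUnit_iff_ne_zero.mpr hd))
    have hmem : ((t - s : ℝ) : ℂ) ∈ spectrum ℂ (M.map (algebraMap ℝ ℂ)) := by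
      rw [spectrum.mem_iff]
      intro hu
      have hmapeq : algebraMap ℂ (Matrix (Fin n) (Fin n) ℂ) ((t - s : ℝ) : ℂ)
          - M.map (algebraMap ℝ ℂ) = (E t).map (algebraMap ℝ ℂ) := by
        ext i j
        simp only [hE_def, hA_def, Matrix.algebraMap_eq_diagonal, Matrix.map_apply,
          Matrix.sub_apply, Matrix.add_apply, Matrix.smul_apply, Matrix.diagonal_apply,
          Pi.algebraMap_apply, Matrix.one_apply, smul_eq_mul]
        by_cases h : i = j <;> simp [h] <;> push_cast <;> ring
      rw [hmapeq] at hu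
      have hdu : IsUnit ((E t).map (algebraMap ℝ ℂ)).det := (Matrix.isUnit_iff_isUnit_det _).mp hu
      rw [← RingHom.mapMatrix_apply, ← RingHom.map_det, hdet] at hdu
      simp at hdu
    have := hH _ hmem
    simp only [Complex.ofReal_re] at this
    linarith
  -- basic identity: E t * R t = 1 for t ≥ s
  have hER : ∀ t : ℝ, s ≤ t → E t * R t = 1 := fun t ht =>
    Ring.mul_inverse_cancel _ (hEunit t ht)
  have hRE : ∀ t : ℝ, s ≤ t → R t * E t = 1 := fun t ht =>
    Ring.inverse_mul_cancel _ (hEunit t ht)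
  -- nonnegativity for large t
  have hbase : ∀ t : ℝ, ‖A‖ < t → NN (R t) := by
    intro t ht
    have ht0 : 0 < t := lt_of_le_of_lt (norm_nonneg A) ht
    set x : Matrix (Fin n) (Fin n) ℝ := t⁻¹ • A with hx_def
    have hx_norm : ‖x‖ < 1 := by
      rw [hx_def, norm_smul, Real.norm_eq_abs, abs_of_pos (inv_pos.mpr ht0)]
      rw [inv_mul_lt_iff₀ ht0, mul_one]
      exact ht
    have hx_nn : NN x := NN.smul (le_of_lt (inv_pos.mpr ht0)) hA_nn
    -- explicit unit for E t
    have hval : E t = t • ((1 : Matrix (Fin n) (Fin n) ℝ) - x) := by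
      rw [hE_def]
      simp only [smul_sub, hx_def, smul_smul, mul_inv_cancel₀ (ne_of_gt ht0), one_smul]
    set u : (Matrix (Fin n) (Fin n) ℝ)ˣ := Units.oneSub x hx_norm with hu_def
    have h1 : E t * (t⁻¹ • (u⁻¹ : (Matrix (Fin n) (Fin n) ℝ)ˣ).val) = 1 := by
      rw [hval]
      rw [smul_mul_smul_comm]
      rw [mul_inv_cancel₀ (ne_of_gt ht0)]
      have : ((u : Matrix (Fin n) (Fin n) ℝ)) = 1 - x := rfl
      rw [← this, u.mul_inv, one_smul]
    have h2 : (t⁻¹ • (u⁻¹ : (Matrix (Fin n) (Fin n) ℝ)ˣ).val) * E t = 1 := by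
      rw [hval, smul_mul_smul_comm, inv_mul_cancel₀ (ne_of_gt ht0)]
      have : ((u : Matrix (Fin n) (Fin n) ℝ)) = 1 - x := rfl
      rw [← this, u.inv_mul, one_smul]
    set w : (Matrix (Fin n) (Fin n) ℝ)ˣ :=
      ⟨E t, t⁻¹ • (u⁻¹ : (Matrix (Fin n) (Fin n) ℝ)ˣ).val, h1, h2⟩ with hw_def
    have hRt : R t = t⁻¹ • (u⁻¹ : (Matrix (Fin n) (Fin n) ℝ)ˣ).val := by
      have h3 : R t = Ring.inverse (w : Matrix (Fin n) (Fin n) ℝ) := rfl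
      rw [h3, Ring.inverse_unit]
      rfl
    rw [hRt]

    have hgeom : ((u⁻¹ : (Matrix (Fin n) (Fin n) ℝ)ˣ) : Matrix (Fin n) (Fin n) ℝ)
        = ∑' k : ℕ, x ^ k := rfl
    rw [hgeom]
    exact NN.smul (le_of_lt (inv_pos.mpr ht0)) (NN.geom hx_norm hx_nn)
  -- continuity of R at each t ≥ s
  have hcont : ∀ t : ℝ, s ≤ t → ContinuousAt R t := by
    intro t ht
    have hEc : Continuous E := by
      rw [hE_def]
      exact (continuous_id.smul continuous_const).sub continuous_const
    have h1 : ContinuousAt Ring.inverse (E t) := by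
      have := NormedRing.inverse_continuousAt (hEunit t ht).unit
      rw [(hEunit t ht).unit_spec] at this; exact this
    exact h1.comp hEc.continuousAt
  -- the downward-propagation step
  have hstep : ∀ t : ℝ, s ≤ t → NN (R t) → ∀ δ : ℝ, 0 ≤ δ → δ * ‖R t‖ < 1 →
      NN (R (t - δ)) := by
    intro t ht hNN δ hδ hδn
    have hxn : ‖δ • R t‖ < 1 := by
      rw [norm_smul, Real.norm_eq_abs, abs_of_nonneg hδ]; exact hδn
    set u2 : (Matrix (Fin n) (Fin n) ℝ)ˣ := Units.oneSub (δ • R t) hxn with hu2_def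
    have hfactor : E (t - δ) = E t * (u2 : Matrix (Fin n) (Fin n) ℝ) := by
      have : ((u2 : Matrix (Fin n) (Fin n) ℝ)) = 1 - δ • R t := rfl
      rw [this, mul_sub, mul_one, mul_smul_comm, hER t ht]
      rw [hE_def]
      simp only [sub_smul, smul_one_mul]
      abel
    set w : (Matrix (Fin n) (Fin n) ℝ)ˣ := (hEunit t ht).unit * u2 with hw_def
    have hwval : (w : Matrix (Fin n) (Fin n) ℝ) = E (t - δ) := by
      rw [hw_def, Units.val_mul, (hEunit t ht).unit_spec, hfactor]
    have hRval : R (t - δ) = ((w⁻¹ : (Matrix (Fin n) (Fin n) ℝ)ˣ) : _) := by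
      have : R (t - δ) = Ring.inverse (w : Matrix (Fin n) (Fin n) ℝ) := by rw [hwval]
      rw [this, Ring.inverse_unit]
    rw [hRval, _root_.mul_inv_rev, Units.val_mul]
    have hg : ((u2⁻¹ : (Matrix (Fin n) (Fin n) ℝ)ˣ) : Matrix (Fin n) (Fin n) ℝ)
        = ∑' k : ℕ, (δ • R t) ^ k := rfl
    have hinv : (((hEunit t ht).unit⁻¹ : (Matrix (Fin n) (Fin n) ℝ)ˣ) : Matrix (Fin n) (Fin n) ℝ)
        = R t := by
      have h2 := Ring.inverse_unit (hEunit t ht).unit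
      rw [(hEunit t ht).unit_spec] at h2
      exact h2.symm
    refine NN.mul ?_ ?_
    · exact NN.geom hxn (NN.smul hδ hNN)
    · rw [hinv]
      exact hNN
  -- the set of thresholds
  set U : Set ℝ := {t : ℝ | s ≤ t ∧ ∀ u : ℝ, t ≤ u → NN (R u)} with hU_def
  have hUmem : max s (‖A‖ + 1) ∈ U := by
    refine ⟨le_max_left _ _, fun u hu => hbase u ?_⟩
    have : ‖A‖ + 1 ≤ u := le_trans (le_max_right s _) hu
    linarith
  have hUne : U.Nonempty := ⟨_, hUmem⟩
  have hUbdd : BddBelow U := ⟨s, fun t ht => ht.1⟩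
  set c : ℝ := sInf U with hc_def
  have hcs : s ≤ c := le_csInf hUne fun t ht => ht.1
  have hgt : ∀ u : ℝ, c < u → NN (R u) := by
    intro u hu
    obtain ⟨t, htU, htu⟩ := (csInf_lt_iff hUbdd hUne).mp hu
    exact htU.2 u (le_of_lt htu)
  have hcNN : NN (R c) := by
    intro i j
    have htend : Tendsto (fun u => R u i j) (nhdsWithin c (Set.Ioi c)) (nhds (R c i j)) := by
      have h1 : ContinuousAt (fun u => R u i j) c := by
        have := ((entryCLM i j).continuous.continuousAt (x := R c)).comp (hcont c hcs)
        simpa [Function.comp_def] using this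
      exact h1.continuousWithinAt.tendsto
    refine ge_of_tendsto htend ?_
    filter_upwards [self_mem_nhdsWithin] with u hu
    exact hgt u hu i j
  have hcU : c ∈ U := by
    refine ⟨hcs, fun u hu => ?_⟩
    rcases eq_or_lt_of_le hu with h | h
    · rw [← h]; exact hcNN
    · exact hgt u h
  have hcse : c = s := by
    by_contra hne
    have hlt : s < c := lt_of_le_of_ne hcs (Ne.symm hne)
    set δ : ℝ := min (c - s) (1 / (‖R c‖ + 1)) with hδ_def
    have hn1 : 0 < ‖R c‖ + 1 := by positivity
    have hδpos : 0 < δ := lt_min (by linarith) (by positivity)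
    have hδn : δ * ‖R c‖ < 1 := by
      have h1 : δ ≤ 1 / (‖R c‖ + 1) := min_le_right _ _
      have h2 : δ * ‖R c‖ ≤ (1 / (‖R c‖ + 1)) * ‖R c‖ :=
        mul_le_mul_of_nonneg_right h1 (norm_nonneg _)
      have h3 : (1 / (‖R c‖ + 1)) * ‖R c‖ < 1 := by
        rw [div_mul_eq_mul_div, one_mul, div_lt_one hn1]
        linarith
      linarith
    have hmemU : c - δ ∈ U := by
      refine ⟨by have := min_le_left (c - s) (1 / (‖R c‖ + 1)); linarith, fun u hu => ?_⟩
      rcases le_or_gt c u with h | h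
      · exact hcU.2 u h
      · have hδ' : u = c - (c - u) := by ring
        rw [hδ']
        refine hstep c hcs hcNN (c - u) (by linarith) ?_
        have hcu : c - u ≤ δ := by linarith
        calc (c - u) * ‖R c‖ ≤ δ * ‖R c‖ :=
              mul_le_mul_of_nonneg_right hcu (norm_nonneg _)
          _ < 1 := hδn
    have : c ≤ c - δ := csInf_le hUbdd hmemU
    linarith
  -- conclusion
  have hsNN : NN (R s) := by
    have := hcU.2 s
    rw [hcse] at this
    exact this le_rfl
  set z : Fin n → ℝ := R s *ᵥ (fun _ => 1) with hz_def
  have hz_nn : ∀ i, 0 ≤ z i := by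
    intro i
    rw [hz_def]
    simp only [Matrix.mulVec, dotProduct]
    exact Finset.sum_nonneg fun j _ => by simpa using hsNN i j
  have hEz : E s *ᵥ z = fun _ => 1 := by
    rw [hz_def, Matrix.mulVec_mulVec, hER s le_rfl, Matrix.one_mulVec]
  have hMz : ∀ i, (M *ᵥ z) i = -1 := by
    intro i
    have hME : M = -(E s) := by
      simp only [hE_def, hA_def]
      abel
    rw [hME]
    have : (-(E s)) *ᵥ z = -(E s *ᵥ z) := Matrix.neg_mulVec _ _
    rw [this, hEz]
    simp
  have hAz : ∀ i, 0 ≤ (A *ᵥ z) i := by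
    intro i
    simp only [Matrix.mulVec, dotProduct]
    exact Finset.sum_nonneg fun j _ => mul_nonneg (hA_nn i j) (hz_nn j)
  have hz_pos : ∀ i, 0 < z i := by
    intro i
    have h1 : (E s *ᵥ z) i = 1 := by rw [hEz]
    have h2 : (E s *ᵥ z) i = s * z i - (A *ᵥ z) i := by
      rw [hE_def]
      simp only [Matrix.sub_mulVec, Matrix.smul_mulVec, Matrix.one_mulVec, Pi.sub_apply,
        Pi.smul_apply, smul_eq_mul]
    have h3 : s * z i = 1 + (A *ᵥ z) i := by rw [h2] at h1; linarith
    have h4 : 0 < s * z i := by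
      have := hAz i
      linarith
    nlinarith
  exact ⟨z, hz_pos, fun i => by rw [hMz i]; norm_num⟩


/-- A Metzler Hurwitz-stable matrix admits a positive vector $z$ with $Mz<0$. -/
theorem stmt2 {n : ℕ} (M : Matrix (Fin n) (Fin n) ℝ)
    (hM : Metzler M) (hH : HurwitzStable M) :
    ∃ z : Fin n → ℝ, (∀ i, 0 < z i) ∧ ∀ i, (M *ᵥ z) i < 0 :=
  stmt2_main M hM hH
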